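/- Existence of a solution to a fractional initial value problem on ℝ: let 0 < α < 1, J = [0, a] ⊂ ℝ, and f : J × ℝ → ℝ be continuous and bounded (|f(t,y)| ≤ M for all t, y). Then there exists a continuous function y : J → ℝ satisfying the integral equation y(t) = (1/Γ(α)) ∫_0^t (t-s)^(α-1) f(s, y(s)) ds for all t ∈ J (equivalently, D_0^α y = f(t,y) with I_0^{1-α} y(0) = 0). -/

import Mathlib

open MeasureTheory intervalIntegral Set Filter Topology

lemma kint {α : ℝ} (hα : 0 < α) (t a b : ℝ) :
    IntervalIntegrable (fun s => (t - s) ^ (α - 1)) volume a b := by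
  have h := (intervalIntegrable_rpow' (a := t - a) (b := t - b) (by linarith : (-1:ℝ) < α - 1)).comp_sub_left t
  simpa using h

lemma kval {α : ℝ} (hα : 0 < α) {t t' : ℝ} (h0 : 0 ≤ t') (h : t' ≤ t) :
    ∫ s in t'..t, (t - s) ^ (α - 1) = (t - t') ^ α / α := by
  rw [intervalIntegral.integral_comp_sub_left (fun u => u ^ (α - 1)) t]
  rw [integral_rpow (Or.inl (by linarith))]
  rw [sub_self, Real.zero_rpow (by linarith), sub_add_cancel]
  ring_nf

lemma kval0 {α : ℝ} (hα : 0 < α) {t t' : ℝ} (h0 : 0 ≤ t') (h : t' ≤ t) :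
    ∫ s in (0:ℝ)..t', (t - s) ^ (α - 1) = (t ^ α - (t - t') ^ α) / α := by
  rw [intervalIntegral.integral_comp_sub_left (fun u => u ^ (α - 1)) t]
  rw [integral_rpow (Or.inl (by linarith))]
  rw [sub_zero, sub_add_cancel]

lemma kGint {α M : ℝ} (hα : 0 < α) {G : ℝ → ℝ} (hG : Continuous G)
    (hGb : ∀ s, |G s| ≤ M) (t a b : ℝ) :
    IntervalIntegrable (fun s => (t - s) ^ (α - 1) * G s) volume a b := by
  have hM0 : 0 ≤ M := le_trans (abs_nonneg _) (hGb 0)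
  have hker := kint hα t a b
  refine (hker.abs.const_mul M).mono_fun ?_ ?_
  · exact (((measurable_const.sub measurable_id).pow_const _).mul hG.measurable).aestronglyMeasurable
  · filter_upwards with s
    have h1 : ‖(t - s) ^ (α - 1) * G s‖ ≤ M * |(t - s) ^ (α - 1)| := by
      rw [Real.norm_eq_abs, abs_mul, mul_comm]
      exact mul_le_mul_of_nonneg_right (hGb s) (abs_nonneg _)
    have h2 : (0:ℝ) ≤ M * |(t - s) ^ (α - 1)| := by positivity
    exact h1.trans_eq (abs_of_nonneg h2).symm
-- bound over subinterval [t',t] of [0,∞)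
lemma kGbnd {α M : ℝ} (hα : 0 < α) {G : ℝ → ℝ} (hG : Continuous G)
    (hGb : ∀ s, |G s| ≤ M) {t t' u : ℝ} (h0 : 0 ≤ t') (h : t' ≤ t) (htu : t ≤ u) :
    |∫ s in t'..t, (u - s) ^ (α - 1) * G s| ≤ M * (u - t') ^ α / α := by
  have hM0 : 0 ≤ M := le_trans (abs_nonneg _) (hGb 0)
  have hb : IntervalIntegrable (fun s => M * (u - s) ^ (α - 1)) volume t' t :=
    ((kint hα u t' t).const_mul M)
  have key : ‖∫ s in t'..t, (u - s) ^ (α - 1) * G s‖ ≤ |∫ s in t'..t, M * (u - s) ^ (α - 1)| := by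
    apply intervalIntegral.norm_integral_le_abs_of_norm_le _ hb
    filter_upwards [ae_restrict_mem measurableSet_uIoc] with s hs
    rw [uIoc_of_le h] at hs
    have hk : 0 ≤ (u - s) ^ (α - 1) := Real.rpow_nonneg (by linarith [hs.2]) _
    rw [Real.norm_eq_abs, abs_mul, abs_of_nonneg hk, mul_comm]
    exact mul_le_mul_of_nonneg_right (hGb s) hk
  rw [Real.norm_eq_abs] at key
  refine key.trans ?_
  rw [intervalIntegral.integral_const_mul]
  have e1 : ∫ s in t'..t, (u - s) ^ (α - 1) = ((u - t') ^ α - (u - t) ^ α)/α := by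
    rw [← intervalIntegral.integral_interval_sub_left (kint hα u 0 t) (kint hα u 0 t'),
      kval0 hα (t' := t) (t := u) (by linarith) htu,
      kval0 hα (t' := t') (t := u) h0 (by linarith)]
    ring
  have hmono : (u - t) ^ α ≤ (u - t') ^ α :=
    Real.rpow_le_rpow (by linarith) (by linarith) hα.le
  have hnn : (0:ℝ) ≤ ((u - t') ^ α - (u - t) ^ α)/α := by
    apply div_nonneg (by linarith) hα.le
  rw [e1, abs_mul, abs_of_nonneg hM0, abs_of_nonneg hnn, mul_div_assoc]
  gcongr
  have : (0:ℝ) ≤ (u - t) ^ α := Real.rpow_nonneg (by linarith) _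
  linarith

lemma rpow_subadd {α x y : ℝ} (hα0 : 0 ≤ α) (hα1 : α ≤ 1) (hx : 0 ≤ x) (hy : 0 ≤ y) :
    (x + y) ^ α ≤ x ^ α + y ^ α := by
  have h := NNReal.rpow_add_le_add_rpow x.toNNReal y.toNNReal hα0 hα1
  have := NNReal.coe_le_coe.2 h
  push_cast at this
  rwa [Real.coe_toNNReal _ hx, Real.coe_toNNReal _ hy] at this

lemma kGholder {α M : ℝ} (hα : 0 < α) (hα1 : α < 1) {G : ℝ → ℝ} (hG : Continuous G)
    (hGb : ∀ s, |G s| ≤ M) {t t' : ℝ} (h0 : 0 ≤ t') (h : t' ≤ t) :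
    |(∫ s in (0:ℝ)..t, (t - s) ^ (α - 1) * G s) -
      (∫ s in (0:ℝ)..t', (t' - s) ^ (α - 1) * G s)| ≤ 2 * M * (t - t') ^ α / α := by
  have hM0 : 0 ≤ M := le_trans (abs_nonneg _) (hGb 0)
  have hsplit := intervalIntegral.integral_add_adjacent_intervals (a := (0:ℝ)) (b := t') (c := t)
      (f := fun s => (t - s) ^ (α - 1) * G s) (kGint hα hG hGb t 0 t') (kGint hα hG hGb t t' t)
  have hdiff : (∫ s in (0:ℝ)..t, (t - s) ^ (α - 1) * G s) -
      (∫ s in (0:ℝ)..t', (t' - s) ^ (α - 1) * G s)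
      = (∫ s in (0:ℝ)..t', ((t - s) ^ (α - 1) - (t' - s) ^ (α - 1)) * G s)
        + ∫ s in t'..t, (t - s) ^ (α - 1) * G s := by
    rw [← hsplit]
    have e := intervalIntegral.integral_sub (kGint hα hG hGb t 0 t') (kGint hα hG hGb t' 0 t')
    simp only [sub_mul] at *
    rw [e]
    ring
  rw [hdiff]
  have hb1 : |∫ s in (0:ℝ)..t', ((t - s) ^ (α - 1) - (t' - s) ^ (α - 1)) * G s|
      ≤ M * (t - t') ^ α / α := by
    have hbint : IntervalIntegrable
        (fun s => M * ((t' - s) ^ (α - 1) - (t - s) ^ (α - 1))) volume 0 t' :=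
      (((kint hα t' 0 t').sub (kint hα t 0 t')).const_mul M)
    have key : ‖∫ s in (0:ℝ)..t', ((t - s) ^ (α - 1) - (t' - s) ^ (α - 1)) * G s‖
        ≤ |∫ s in (0:ℝ)..t', M * ((t' - s) ^ (α - 1) - (t - s) ^ (α - 1))| := by
      apply intervalIntegral.norm_integral_le_abs_of_norm_le _ hbint
      have hne : ∀ᵐ s ∂(volume.restrict (Set.uIoc (0:ℝ) t')), s ≠ t' := by
        apply ae_restrict_of_ae
        have h1 : {s : ℝ | ¬ s ≠ t'} = {t'} := by ext s; simp
        rw [MeasureTheory.ae_iff, h1]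
        exact Real.volume_singleton
      filter_upwards [ae_restrict_mem measurableSet_uIoc, hne] with s hs hsne
      rw [uIoc_of_le h0] at hs
      have hs1 : 0 < t' - s := lt_of_le_of_ne (by linarith [hs.2]) (by intro hc; apply hsne; linarith)
      have hmono : (t - s) ^ (α - 1) ≤ (t' - s) ^ (α - 1) :=
        Real.rpow_le_rpow_of_nonpos hs1 (by linarith) (by linarith)
      have hk : 0 ≤ (t - s) ^ (α - 1) := Real.rpow_nonneg (by linarith) _
      rw [Real.norm_eq_abs, abs_mul]
      have habs : |(t - s) ^ (α - 1) - (t' - s) ^ (α - 1)| = (t' - s) ^ (α - 1) - (t - s) ^ (α - 1) := by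
        rw [abs_sub_comm, abs_of_nonneg (by linarith)]
      rw [habs, mul_comm M]
      exact mul_le_mul (le_refl _) (hGb s) (abs_nonneg _) (by linarith)
    rw [Real.norm_eq_abs] at key
    refine key.trans ?_
    rw [intervalIntegral.integral_const_mul,
      intervalIntegral.integral_sub (kint hα t' 0 t') (kint hα t 0 t'),
      kval0 hα (le_refl 0 |>.trans h0) (le_refl t'), kval0 hα h0 h, sub_self,
      Real.zero_rpow (by linarith)]
    have hsub : t ^ α ≤ t' ^ α + (t - t') ^ α := by
      have := rpow_subadd hα.le hα1.le h0 (by linarith : (0:ℝ) ≤ t - t')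
      rwa [add_sub_cancel] at this
    have hmono2 : t' ^ α ≤ t ^ α := Real.rpow_le_rpow h0 h hα.le
    rw [abs_mul, abs_of_nonneg hM0]
    have : |(t' ^ α - 0) / α - (t ^ α - (t - t') ^ α) / α| ≤ (t - t') ^ α / α := by
      rw [← sub_div, abs_div, abs_of_pos hα]
      gcongr
      rw [abs_le]
      constructor <;> linarith
    calc M * |(t' ^ α - 0) / α - (t ^ α - (t - t') ^ α) / α| ≤ M * ((t - t') ^ α / α) :=
          mul_le_mul_of_nonneg_left this hM0
      _ = M * (t - t') ^ α / α := by ring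
  have hb2 := kGbnd hα hG hGb h0 h (le_refl t)
  calc |(∫ s in (0:ℝ)..t', ((t - s) ^ (α - 1) - (t' - s) ^ (α - 1)) * G s)
        + ∫ s in t'..t, (t - s) ^ (α - 1) * G s|
      ≤ |∫ s in (0:ℝ)..t', ((t - s) ^ (α - 1) - (t' - s) ^ (α - 1)) * G s|
        + |∫ s in t'..t, (t - s) ^ (α - 1) * G s| := abs_add_le _ _
    _ ≤ M * (t - t') ^ α / α + M * (t - t') ^ α / α := add_le_add hb1 hb2
    _ = 2 * M * (t - t') ^ α / α := by ring

noncomputable def fracT (α : ℝ) (F : ℝ → ℝ → ℝ) (w : ℝ → ℝ) : ℝ → ℝ :=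
  fun t => (Real.Gamma α)⁻¹ * ∫ s in (0:ℝ)..(max t 0), (max t 0 - s) ^ (α - 1) * F s (w s)

section
variable {α M : ℝ} {F : ℝ → ℝ → ℝ}

lemma holder_cont {K : ℝ} (hα : 0 < α) {y : ℝ → ℝ}
    (h : ∀ t t', |y t - y t'| ≤ K * |t - t'| ^ α) : Continuous y := by
  rw [continuous_iff_continuousAt]
  intro b
  rw [ContinuousAt, tendsto_iff_dist_tendsto_zero]
  have habs : Tendsto (fun s : ℝ => |s - b|) (𝓝 b) (𝓝 0) := by
    have : Continuous fun s : ℝ => |s - b| := continuous_abs.comp (continuous_sub_right b)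
    simpa using this.tendsto b
  have hpow : Tendsto (fun s : ℝ => |s - b| ^ α) (𝓝 b) (𝓝 0) := by
    have hc := (Real.continuousAt_rpow_const 0 α (Or.inr hα.le)).tendsto
    rw [Real.zero_rpow hα.ne'] at hc
    exact hc.comp habs
  have hmul : Tendsto (fun s : ℝ => K * |s - b| ^ α) (𝓝 b) (𝓝 0) := by
    simpa using hpow.const_mul K
  exact squeeze_zero (fun s => dist_nonneg) (fun s => (h s b).trans_eq rfl) hmul

lemma fracT_holder (hα : 0 < α) (hα1 : α < 1)
    (hF : Continuous (fun p : ℝ × ℝ => F p.1 p.2)) (hFb : ∀ s y, |F s y| ≤ M)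
    {w : ℝ → ℝ} (hw : Continuous w) (t t' : ℝ) :
    |fracT α F w t - fracT α F w t'| ≤ 2 * M * (Real.Gamma α)⁻¹ / α * |t - t'| ^ α := by
  have hΓ : 0 < (Real.Gamma α)⁻¹ := inv_pos.2 (Real.Gamma_pos_of_pos hα)
  have hM0 : 0 ≤ M := le_trans (abs_nonneg _) (hFb 0 0)
  have hG : Continuous fun s => F s (w s) := hF.comp (continuous_id.prodMk hw)
  have hGb : ∀ s, |F s (w s)| ≤ M := fun s => hFb s (w s)
  -- key inner estimate, symmetric formulation
  have key : ∀ t t' : ℝ, t' ≤ t →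
      |fracT α F w t - fracT α F w t'| ≤ 2 * M * (Real.Gamma α)⁻¹ / α * |t - t'| ^ α := by
    intro t t' htt
    have h0 : (0:ℝ) ≤ max t' 0 := le_max_right _ _
    have huu : max t' 0 ≤ max t 0 := max_le_max htt (le_refl 0)
    have hin := kGholder hα hα1 hG hGb h0 huu
    have hmax : max t 0 - max t' 0 ≤ |t - t'| := by
      have := abs_max_sub_max_le_abs t t' 0
      calc max t 0 - max t' 0 ≤ |max t 0 - max t' 0| := le_abs_self _
        _ ≤ |t - t'| := this
    have hpow : (max t 0 - max t' 0) ^ α ≤ |t - t'| ^ α :=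
      Real.rpow_le_rpow (by linarith) hmax hα.le
    have : fracT α F w t - fracT α F w t' = (Real.Gamma α)⁻¹ *
        ((∫ s in (0:ℝ)..(max t 0), (max t 0 - s) ^ (α - 1) * F s (w s)) -
         (∫ s in (0:ℝ)..(max t' 0), (max t' 0 - s) ^ (α - 1) * F s (w s))) := by
      simp only [fracT]; ring
    rw [this, abs_mul, abs_of_pos hΓ]
    calc (Real.Gamma α)⁻¹ * |_| ≤ (Real.Gamma α)⁻¹ * (2 * M * (max t 0 - max t' 0) ^ α / α) :=
          mul_le_mul_of_nonneg_left hin hΓ.le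
      _ ≤ (Real.Gamma α)⁻¹ * (2 * M * |t - t'| ^ α / α) := by
          apply mul_le_mul_of_nonneg_left _ hΓ.le
          gcongr
      _ = 2 * M * (Real.Gamma α)⁻¹ / α * |t - t'| ^ α := by ring
  rcases le_total t' t with hle | hle
  · exact key t t' hle
  · rw [abs_sub_comm, abs_sub_comm t t']
    exact key t' t hle

end



section
variable {α M : ℝ} {F : ℝ → ℝ → ℝ}

lemma fracT_bound (hα : 0 < α)
    (hF : Continuous (fun p : ℝ × ℝ => F p.1 p.2)) (hFb : ∀ s y, |F s y| ≤ M)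
    {w : ℝ → ℝ} (hw : Continuous w) (t : ℝ) :
    |fracT α F w t| ≤ (Real.Gamma α)⁻¹ * (M * (max t 0) ^ α / α) := by
  have hΓ : 0 < (Real.Gamma α)⁻¹ := inv_pos.2 (Real.Gamma_pos_of_pos hα)
  have hG : Continuous fun s => F s (w s) := hF.comp (continuous_id.prodMk hw)
  have hGb : ∀ s, |F s (w s)| ≤ M := fun s => hFb s (w s)
  have h := kGbnd hα hG hGb (le_refl (0:ℝ)) (le_max_right t 0) (le_refl (max t 0))
  rw [sub_zero] at h
  rw [fracT, abs_mul, abs_of_pos hΓ]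
  exact mul_le_mul_of_nonneg_left h hΓ.le

lemma fracT_congr {b : ℝ} (hb : 0 ≤ b) {w w' : ℝ → ℝ}
    (hww' : ∀ s ∈ Icc (0:ℝ) b, w s = w' s) {t : ℝ} (ht : t ≤ b) :
    fracT α F w t = fracT α F w' t := by
  have hmax : max t 0 ≤ b := max_le ht hb
  unfold fracT
  congr 1
  apply intervalIntegral.integral_congr
  intro s hs
  rw [uIcc_of_le (le_max_right t 0)] at hs
  have : s ∈ Icc (0:ℝ) b := ⟨hs.1, hs.2.trans hmax⟩
  simp only [hww' s this]

lemma fracT_nonpos {w : ℝ → ℝ} {t : ℝ} (ht : t ≤ 0) : fracT α F w t = 0 := by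
  unfold fracT
  rw [max_eq_right ht, intervalIntegral.integral_same, mul_zero]

noncomputable def fracZ (α : ℝ) (F : ℝ → ℝ → ℝ) (h : ℝ) : ℕ → ℝ → ℝ
  | 0 => fun _ => 0
  | (k+1) => fracT α F (fun s => fracZ α F h k (s - h))

lemma fracZ_cont (hα : 0 < α) (hα1 : α < 1)
    (hF : Continuous (fun p : ℝ × ℝ => F p.1 p.2)) (hFb : ∀ s y, |F s y| ≤ M)
    (h : ℝ) : ∀ k, Continuous (fracZ α F h k) := by
  intro k
  induction k with
  | zero => exact continuous_const
  | succ k ih =>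
    exact holder_cont hα (fracT_holder hα hα1 hF hFb (ih.comp (continuous_sub_right h)))

lemma fracZ_agree (hα : 0 < α) (hα1 : α < 1)
    (hF : Continuous (fun p : ℝ × ℝ => F p.1 p.2)) (hFb : ∀ s y, |F s y| ≤ M)
    {h : ℝ} (hh : 0 < h) :
    ∀ k : ℕ, ∀ t : ℝ, t ≤ (k:ℝ) * h → fracZ α F h (k+1) t = fracZ α F h k t := by
  intro k
  induction k with
  | zero =>
    intro t ht
    simp only [Nat.cast_zero, zero_mul] at ht
    show fracT α F _ t = 0
    exact fracT_nonpos ht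
  | succ k ih =>
    intro t ht
    show fracT α F (fun s => fracZ α F h (k+1) (s - h)) t
        = fracT α F (fun s => fracZ α F h k (s - h)) t
    apply fracT_congr (b := (k+1:ℕ) * h) (by positivity) _ ht
    intro s hs
    apply ih
    push_cast at hs ⊢
    nlinarith [hs.1, hs.2]

lemma fracZ_delay_eq (hα : 0 < α) (hα1 : α < 1)
    (hF : Continuous (fun p : ℝ × ℝ => F p.1 p.2)) (hFb : ∀ s y, |F s y| ≤ M)
    {a : ℝ} (ha : 0 < a) (n : ℕ) {t : ℝ} (ht : t ≤ a) :
    fracZ α F (a/(n+1)) (n+1) t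
      = fracT α F (fun s => fracZ α F (a/(n+1)) (n+1) (s - a/(n+1))) t := by
  set h := a/(n+1) with hh
  have hhpos : 0 < h := by positivity
  show fracT α F (fun s => fracZ α F h n (s - h)) t = _
  apply fracT_congr (b := a) ha.le _ ht
  intro s hs
  have hsh : s - h ≤ n * h := by
    have : (n:ℝ) * h = a - h := by
      rw [hh, mul_div_assoc', eq_sub_iff_add_eq, ← add_div, div_eq_iff (by positivity)]
      ring
    rw [this]
    linarith [hs.2]
  simp only [fracZ_agree hα hα1 hF hFb hhpos n (s - h) hsh]
end





theorem fractional_IVP_has_solution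
    (α a M : ℝ) (hα : 0 < α) (hα1 : α < 1) (ha : 0 < a)
    (f : ℝ → ℝ → ℝ)
    (hf : ContinuousOn (fun p : ℝ × ℝ => f p.1 p.2)
      (Set.Icc 0 a ×ˢ (Set.univ : Set ℝ)))
    (hM : ∀ t ∈ Set.Icc (0:ℝ) a, ∀ y : ℝ, |f t y| ≤ M) :
    ∃ y : ℝ → ℝ, ContinuousOn y (Set.Icc 0 a) ∧
      ∀ t ∈ Set.Icc (0:ℝ) a,
        y t = (1 / Real.Gamma α) * ∫ s in (0:ℝ)..t, (t - s) ^ (α - 1) * f s (y s) := by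
  have hΓ : 0 < (Real.Gamma α)⁻¹ := inv_pos.2 (Real.Gamma_pos_of_pos hα)
  have hM0 : 0 ≤ M := le_trans (abs_nonneg _) (hM 0 ⟨le_refl 0, ha.le⟩ 0)
  -- clamp the time variable
  set proj : ℝ → ℝ := fun s => max 0 (min s a) with hproj_def
  have hproj_cont : Continuous proj := continuous_const.max (continuous_id.min continuous_const)
  have hproj_mem : ∀ s, proj s ∈ Icc (0:ℝ) a :=
    fun s => ⟨le_max_left _ _, max_le (by linarith [min_le_right s a]) (min_le_right s a)⟩
  have hproj_id : ∀ s ∈ Icc (0:ℝ) a, proj s = s := by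
    intro s hs
    simp only [hproj_def]
    rw [min_eq_left hs.2, max_eq_right hs.1]
  set F : ℝ → ℝ → ℝ := fun s y => f (proj s) y with hF_def
  have hFcont : Continuous (fun p : ℝ × ℝ => F p.1 p.2) := by
    apply hf.comp_continuous (hproj_cont.comp continuous_fst |>.prodMk continuous_snd)
    exact fun p => ⟨hproj_mem p.1, mem_univ _⟩
  have hFb : ∀ s y, |F s y| ≤ M := fun s y => hM (proj s) (hproj_mem s) y
  have hFf : ∀ s ∈ Icc (0:ℝ) a, ∀ y, F s y = f s y := by
    intro s hs y
    simp only [hF_def, hproj_id s hs]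
  -- the approximating sequence
  set K : ℝ := 2 * M * (Real.Gamma α)⁻¹ / α with hK_def
  have hK0 : 0 ≤ K := by positivity
  set C : ℝ := (Real.Gamma α)⁻¹ * (M * a ^ α / α) with hC_def
  have hC0 : 0 ≤ C := by positivity
  set Y : ℕ → ℝ → ℝ := fun n => fracZ α F (a/(n+1)) (n+1) with hY_def
  have hYcont : ∀ n, Continuous (Y n) := fun n => fracZ_cont hα hα1 hFcont hFb _ _
  have hwcont : ∀ n, Continuous (fun s => Y n (s - a/(n+1))) :=
    fun n => (hYcont n).comp (continuous_sub_right _)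
  have hYfracT : ∀ n, Y n = fracT α F (fun s => fracZ α F (a/(n+1)) n (s - a/(n+1))) :=
    fun n => rfl
  have hYholder : ∀ n, ∀ t t', |Y n t - Y n t'| ≤ K * |t - t'| ^ α := by
    intro n t t'
    rw [hYfracT n]
    exact fracT_holder hα hα1 hFcont hFb
      ((fracZ_cont hα hα1 hFcont hFb _ n).comp (continuous_sub_right _)) t t'
  have hYbound : ∀ n, ∀ t ∈ Icc (0:ℝ) a, |Y n t| ≤ C := by
    intro n t ht
    rw [hYfracT n]
    refine (fracT_bound hα hFcont hFb
      ((fracZ_cont hα hα1 hFcont hFb _ n).comp (continuous_sub_right _)) t).trans ?_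
    rw [hC_def]
    have h1 : max t 0 ≤ a := max_le ht.2 ha.le
    have h2 : (max t 0) ^ α ≤ a ^ α := Real.rpow_le_rpow (le_max_right _ _) h1 hα.le
    gcongr
  have hYdelay : ∀ n, ∀ t ∈ Icc (0:ℝ) a,
      Y n t = (Real.Gamma α)⁻¹ *
        ∫ s in (0:ℝ)..t, (t - s) ^ (α - 1) * F s (Y n (s - a/(n+1))) := by
    intro n t ht
    have := fracZ_delay_eq (M := M) hα hα1 hFcont hFb ha n ht.2
    rw [hY_def]
    simp only [this, fracT, max_eq_left ht.1]
  -- Arzelà–Ascoli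
  set gseq : ℕ → (BoundedContinuousFunction (Icc (0:ℝ) a) ℝ) := fun n =>
    BoundedContinuousFunction.mkOfBound
      ⟨fun x => Y n x.1, (hYcont n).comp continuous_subtype_val⟩ (2 * C)
      (fun x y => by
        rw [ContinuousMap.coe_mk, Real.dist_eq]
        have h1 := hYbound n x.1 x.2
        have h2 := hYbound n y.1 y.2
        have := abs_sub (Y n x.1) (Y n y.1)
        calc |Y n x.1 - Y n y.1| ≤ |Y n x.1| + |Y n y.1| := abs_sub _ _
          _ ≤ 2 * C := by linarith) with hg_def
  have in_s : ∀ (b : BoundedContinuousFunction (Icc (0:ℝ) a) ℝ) (x : Icc (0:ℝ) a),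
      b ∈ Set.range gseq → b x ∈ Icc (-C) C := by
    rintro b x ⟨n, rfl⟩
    have := hYbound n x.1 x.2
    rw [abs_le] at this
    exact ⟨this.1, this.2⟩
  have equi : Equicontinuous ((↑) : Set.range gseq → (Icc (0:ℝ) a → ℝ)) := by
    apply Metric.equicontinuous_of_continuity_modulus (fun u => K * |u| ^ α)
    · have hpow : Tendsto (fun u : ℝ => |u| ^ α) (𝓝 0) (𝓝 0) := by
        have hc := (Real.continuousAt_rpow_const 0 α (Or.inr hα.le)).tendsto
        rw [Real.zero_rpow hα.ne'] at hc
        have habs : Tendsto (fun u : ℝ => |u|) (𝓝 0) (𝓝 0) := by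
          simpa using continuous_abs.tendsto (0:ℝ)
        exact hc.comp habs
      simpa using hpow.const_mul K
    · rintro x y ⟨b, ⟨n, rfl⟩⟩
      calc dist (gseq n x) (gseq n y) = |Y n x.1 - Y n y.1| := Real.dist_eq _ _
        _ ≤ K * |x.1 - y.1| ^ α := hYholder n x.1 y.1
        _ = K * |dist x y| ^ α := by
            rw [Subtype.dist_eq, Real.dist_eq, abs_abs]
  have hcomp : IsCompact (closure (Set.range gseq)) :=
    BoundedContinuousFunction.arzela_ascoli (Icc (-C) C) isCompact_Icc _ in_s equi
  obtain ⟨G, -, φ, hφ, hconv⟩ :=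
    hcomp.tendsto_subseq (fun n => subset_closure (mem_range_self n))
  have hdist : Tendsto (fun j => dist (gseq (φ j)) G) atTop (𝓝 0) :=
    tendsto_iff_dist_tendsto_zero.mp hconv
  -- the candidate solution
  set ybar : ℝ → ℝ := fun t => G ⟨proj t, hproj_mem t⟩ with hybar_def
  have hybar_cont : Continuous ybar :=
    G.continuous.comp (hproj_cont.subtype_mk _)
  have hybar_eq : ∀ t (ht : t ∈ Icc (0:ℝ) a), ybar t = G ⟨t, ht⟩ := by
    intro t ht
    simp only [hybar_def]
    congr 1
    exact Subtype.ext (hproj_id t ht)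
  have hpt : ∀ j, ∀ s (hs : s ∈ Icc (0:ℝ) a),
      |Y (φ j) s - ybar s| ≤ dist (gseq (φ j)) G := by
    intro j s hs
    rw [hybar_eq s hs]
    have h2 := BoundedContinuousFunction.dist_coe_le_dist (f := gseq (φ j)) (g := G)
      (⟨s, hs⟩ : Icc (0:ℝ) a)
    rw [Real.dist_eq] at h2
    exact h2
  -- limits
  have hh0 : Tendsto (fun j => a / ((φ j : ℝ) + 1)) atTop (𝓝 0) := by
    apply Tendsto.div_atTop (tendsto_const_nhds (x := a))
    apply Filter.tendsto_atTop_add_const_right _ 1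
    exact tendsto_natCast_atTop_atTop.comp hφ.tendsto_atTop
  have hhpow : Tendsto (fun j => K * |a / ((φ j : ℝ) + 1)| ^ α) atTop (𝓝 0) := by
    have hc := (Real.continuousAt_rpow_const 0 α (Or.inr hα.le)).tendsto
    rw [Real.zero_rpow hα.ne'] at hc
    have habs : Tendsto (fun j => |a / ((φ j : ℝ) + 1)|) atTop (𝓝 0) := by
      have := continuous_abs.tendsto (0:ℝ)
      simp only [abs_zero] at this
      exact this.comp hh0
    simpa using (hc.comp habs).const_mul K
  refine ⟨ybar, hybar_cont.continuousOn, ?_⟩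
  intro t ht
  -- pointwise limit of the delayed-argument values
  have hYlim : ∀ s ∈ Ioc (0:ℝ) t, Tendsto (fun j => Y (φ j) (s - a/((φ j : ℝ)+1)))
      atTop (𝓝 (ybar s)) := by
    intro s hs
    have hsa : s ∈ Icc (0:ℝ) a := ⟨hs.1.le, hs.2.trans ht.2⟩
    rw [tendsto_iff_dist_tendsto_zero]
    apply squeeze_zero (fun j => dist_nonneg)
      (g := fun j => K * |a / ((φ j : ℝ) + 1)| ^ α + dist (gseq (φ j)) G)
    · intro j
      rw [Real.dist_eq]
      calc |Y (φ j) (s - a/((φ j : ℝ)+1)) - ybar s|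
          ≤ |Y (φ j) (s - a/((φ j : ℝ)+1)) - Y (φ j) s| + |Y (φ j) s - ybar s| := by
            have := abs_sub_abs_le_abs_sub (Y (φ j) (s - a/((φ j : ℝ)+1)) - ybar s) 0
            calc |Y (φ j) (s - a/((φ j : ℝ)+1)) - ybar s|
                = |(Y (φ j) (s - a/((φ j : ℝ)+1)) - Y (φ j) s) + (Y (φ j) s - ybar s)| := by
                  ring_nf
              _ ≤ _ := abs_add_le _ _
        _ ≤ K * |a / ((φ j : ℝ) + 1)| ^ α + dist (gseq (φ j)) G := by
            apply add_le_add
            · have := hYholder (φ j) (s - a/((φ j : ℝ)+1)) s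
              simpa using this
            · exact hpt j s hsa
    · simpa using hhpow.add hdist
  -- dominated convergence for the integrals
  have hker_meas : Measurable fun s => (t - s) ^ (α - 1) :=
    (measurable_const.sub measurable_id).pow_const _
  have hintlim : Tendsto
      (fun j => ∫ s in (0:ℝ)..t, (t - s) ^ (α - 1) * F s (Y (φ j) (s - a/((φ j : ℝ)+1))))
      atTop (𝓝 (∫ s in (0:ℝ)..t, (t - s) ^ (α - 1) * F s (ybar s))) := by
    apply intervalIntegral.tendsto_integral_filter_of_dominated_convergence
      (bound := fun s => M * |(t - s) ^ (α - 1)|)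
    · filter_upwards with j
      exact (hker_meas.mul (((hFcont.comp (continuous_id.prodMk
        ((hYcont (φ j)).comp (continuous_sub_right _)))).measurable))).aestronglyMeasurable
    · filter_upwards with j
      filter_upwards with s _
      rw [Real.norm_eq_abs, abs_mul, mul_comm]
      exact mul_le_mul_of_nonneg_right (hFb s _) (abs_nonneg _)
    · exact ((kint hα t 0 t).abs.const_mul M)
    · filter_upwards with s hs
      rw [uIoc_of_le ht.1] at hs
      have hFs : Continuous (fun y => F s y) :=
        hFcont.comp (continuous_const.prodMk continuous_id)
      exact tendsto_const_nhds.mul (hFs.continuousAt.tendsto.comp (hYlim s hs))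
  have hLHS : Tendsto (fun j => Y (φ j) t) atTop (𝓝 (ybar t)) := by
    rw [tendsto_iff_dist_tendsto_zero]
    apply squeeze_zero (fun j => dist_nonneg) (g := fun j => dist (gseq (φ j)) G) _ hdist
    intro j
    rw [Real.dist_eq]
    exact hpt j t ht
  have hRHS : Tendsto (fun j => Y (φ j) t) atTop
      (𝓝 ((Real.Gamma α)⁻¹ * ∫ s in (0:ℝ)..t, (t - s) ^ (α - 1) * F s (ybar s))) := by
    have := hintlim.const_mul ((Real.Gamma α)⁻¹)
    apply this.congr
    intro j
    exact (hYdelay (φ j) t ht).symm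
  have heq := tendsto_nhds_unique hLHS hRHS
  rw [heq, one_div]
  congr 1
  apply intervalIntegral.integral_congr
  intro s hs
  rw [uIcc_of_le ht.1] at hs
  have hsa : s ∈ Icc (0:ℝ) a := ⟨hs.1, hs.2.trans ht.2⟩
  simp only [hFf s hsa]
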